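/- If a partial coloring of an n×n square has more than n uncolored entries, then it cannot be uniquely extendable to a Latin square L(n, 2n-1); consequently d(L(n,2n-1)) ≥ n² - n. -/
import Mathlib


/-- An `L(n,k)`: an `n × n` array colored with `k` colors such that all entries
in any row and any column have distinct colors. -/
def IsLatin (n k : ℕ) (L : Fin n → Fin n → Fin k) : Prop :=
  (∀ i : Fin n, Function.Injective (L i)) ∧
  (∀ j : Fin n, Function.Injective (fun i => L i j))

/-- `L` extends the partial coloring `P`. -/
def ExtendsPC {n k : ℕ} (P : Fin n → Fin n → Option (Fin k))
    (L : Fin n → Fin n → Fin k) : Prop :=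
  ∀ i j c, P i j = some c → L i j = c

/-- The partial coloring `P` uniquely extends to an `L(n,k)`. -/
def UniquelyExtends (n k : ℕ) (P : Fin n → Fin n → Option (Fin k)) : Prop :=
  ∃! L : Fin n → Fin n → Fin k, IsLatin n k L ∧ ExtendsPC P L

/-- Number of uncolored entries of a partial coloring. -/
def numUncolored {n k : ℕ} (P : Fin n → Fin n → Option (Fin k)) : ℕ :=
  (Finset.univ.filter (fun p : Fin n × Fin n => P p.1 p.2 = none)).card

/-- Number of colored entries of a partial coloring. -/
def numColored {n k : ℕ} (P : Fin n → Fin n → Option (Fin k)) : ℕ :=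
  (Finset.univ.filter (fun p : Fin n × Fin n => P p.1 p.2 ≠ none)).card

/-- The defining number `d(L(n,k))`. -/
noncomputable def definingNumber (n k : ℕ) : ℕ :=
  sInf {m | ∃ P : Fin n → Fin n → Option (Fin k),
    UniquelyExtends n k P ∧ numColored P = m}

/-- The set of available colors for entry `(i,j)`: colors not appearing among
the colored entries of row `i` or column `j`. -/
def availColors {n k : ℕ} (P : Fin n → Fin n → Option (Fin k)) (i j : Fin n) :
    Finset (Fin k) :=
  Finset.univ.filter (fun c => (∀ w, P i w ≠ some c) ∧ (∀ h, P h j ≠ some c))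

section Aux

variable {n : ℕ} {P : Fin n → Fin n → Option (Fin (2*n-1))}
  {L : Fin n → Fin n → Fin (2*n-1)}

/-- Key lemma: if `P` uniquely extends to `L` and `(i,j)` is uncolored,
then any color missing from row `i` of `L` appears in column `j` of `L`. -/
lemma key_missing_in_col (hLat : IsLatin n (2*n-1) L) (hExt : ExtendsPC P L)
    (hUniq : ∀ L', IsLatin n (2*n-1) L' ∧ ExtendsPC P L' → L' = L)
    {i j : Fin n} (hij : P i j = none) {c : Fin (2*n-1)}
    (hc : ∀ w, L i w ≠ c) : ∃ h, L h j = c := by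
  by_contra hcol
  push_neg at hcol
  set L' : Fin n → Fin n → Fin (2*n-1) :=
    fun a b => if a = i ∧ b = j then c else L a b with hL'
  have hL'Lat : IsLatin n (2*n-1) L' := by
    constructor
    · intro a b b' hbb'
      by_cases ha : a = i
      · subst ha
        simp only [hL', true_and] at hbb'
        by_cases hb : b = j <;> by_cases hb' : b' = j
        · rw [hb, hb']
        · rw [if_pos hb, if_neg hb'] at hbb'
          exact absurd hbb'.symm (hc b')
        · rw [if_neg hb, if_pos hb'] at hbb'
          exact absurd hbb' (hc b)
        · rw [if_neg hb, if_neg hb'] at hbb'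
          exact hLat.1 a hbb'
      · simp only [hL', ha, false_and, if_neg, if_false] at hbb'
        exact hLat.1 a hbb'
    · intro b a a' haa'
      by_cases hb : b = j
      · subst hb
        simp only [hL', and_true] at haa'
        by_cases ha : a = i <;> by_cases ha' : a' = i
        · rw [ha, ha']
        · rw [if_pos ha, if_neg ha'] at haa'
          exact absurd haa'.symm (hcol a')
        · rw [if_neg ha, if_pos ha'] at haa'
          exact absurd haa' (hcol a)
        · rw [if_neg ha, if_neg ha'] at haa'
          exact hLat.2 b haa'
      · simp only [hL', hb, and_false, if_false] at haa'
        exact hLat.2 b haa'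
  have hL'Ext : ExtendsPC P L' := by
    intro a b d hd
    by_cases h : a = i ∧ b = j
    · rw [h.1, h.2, hij] at hd; exact absurd hd (by simp)
    · simp only [hL', if_neg h]; exact hExt a b d hd
  have := hUniq L' ⟨hL'Lat, hL'Ext⟩
  have h2 : L' i j = c := by simp [hL']
  rw [this] at h2
  exact hc j h2

/-- The set of colors in column `j` equals the complement of the row-`i` colors
together with `L i j`, when `(i,j)` is uncolored. -/
lemma col_eq (hLat : IsLatin n (2*n-1) L) (hExt : ExtendsPC P L)
    (hUniq : ∀ L', IsLatin n (2*n-1) L' ∧ ExtendsPC P L' → L' = L)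
    {i j : Fin n} (hij : P i j = none) :
    Finset.image (fun h => L h j) Finset.univ =
      insert (L i j) ((Finset.image (L i) Finset.univ)ᶜ) := by
  have hn : 0 < n := i.pos
  have hRow : (Finset.image (L i) Finset.univ).card = n := by
    rw [Finset.card_image_of_injective _ (hLat.1 i), Finset.card_univ, Fintype.card_fin]
  have hCol : (Finset.image (fun h => L h j) Finset.univ).card = n := by
    rw [Finset.card_image_of_injective _ (hLat.2 j), Finset.card_univ, Fintype.card_fin]
  have hA : ((Finset.image (L i) Finset.univ)ᶜ).card = n - 1 := by
    rw [Finset.card_compl, hRow, Fintype.card_fin]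
    omega
  have hmem : L i j ∉ (Finset.image (L i) Finset.univ)ᶜ := by
    simp [Finset.mem_compl]
  have hsub : insert (L i j) ((Finset.image (L i) Finset.univ)ᶜ) ⊆
      Finset.image (fun h => L h j) Finset.univ := by
    intro c hc
    rcases Finset.mem_insert.mp hc with hc | hc
    · subst hc; exact Finset.mem_image.mpr ⟨i, Finset.mem_univ i, rfl⟩
    · rw [Finset.mem_compl] at hc
      have hc' : ∀ w, L i w ≠ c := by
        intro w hw; exact hc (Finset.mem_image.mpr ⟨w, Finset.mem_univ w, hw⟩)
      obtain ⟨h, hh⟩ := key_missing_in_col hLat hExt hUniq hij hc'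
      exact Finset.mem_image.mpr ⟨h, Finset.mem_univ h, hh⟩
  have hcard : (insert (L i j) ((Finset.image (L i) Finset.univ)ᶜ)).card = n := by
    rw [Finset.card_insert_of_notMem hmem, hA]; omega
  exact (Finset.eq_of_subset_of_card_le hsub (by rw [hCol, hcard])).symm

end Aux

theorem more_than_n_uncolored_not_unique (n : ℕ) :
    (∀ P : Fin n → Fin n → Option (Fin (2*n-1)),
      n < numUncolored P → ¬ UniquelyExtends n (2*n-1) P) ∧
    n^2 - n ≤ definingNumber n (2*n-1) := by
  have main : ∀ P : Fin n → Fin n → Option (Fin (2*n-1)),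
      n < numUncolored P → ¬ UniquelyExtends n (2*n-1) P := by
    intro P hP hU
    obtain ⟨L, ⟨hLat, hExt⟩, hUniq'⟩ := hU
    have hUniq : ∀ L', IsLatin n (2*n-1) L' ∧ ExtendsPC P L' → L' = L := hUniq'
    -- pigeonhole: two uncolored cells in the same row
    have hmaps : ∀ p ∈ Finset.univ.filter (fun p : Fin n × Fin n => P p.1 p.2 = none),
        p.1 ∈ (Finset.univ : Finset (Fin n)) := fun p _ => Finset.mem_univ _
    have hlt : (Finset.univ : Finset (Fin n)).card <
        (Finset.univ.filter (fun p : Fin n × Fin n => P p.1 p.2 = none)).card := by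
      rw [Finset.card_univ, Fintype.card_fin]; exact hP
    obtain ⟨p, hp, q, hq, hpq, hfst⟩ :=
      Finset.exists_ne_map_eq_of_card_lt_of_maps_to hlt hmaps
    simp only [Finset.mem_filter, Finset.mem_univ, true_and] at hp hq
    obtain ⟨i, j1⟩ := p
    obtain ⟨i', j2⟩ := q
    simp only at hfst hp hq
    subst hfst
    have hj : j1 ≠ j2 := fun h => hpq (by rw [h])
    -- columns j1 and j2 colors
    have hcol1 := col_eq hLat hExt hUniq hp
    have hcol2 := col_eq hLat hExt hUniq hq
    have hne12 : L i j1 ≠ L i j2 := fun h => hj (hLat.1 i h)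
    have hinRow : ∀ b : Fin n, L i b ∉ (Finset.image (L i) Finset.univ)ᶜ := by
      intro b; simp [Finset.mem_compl]
    -- L i j2 does not appear in column j1
    have hnc1 : ∀ h : Fin n, L h j1 ≠ L i j2 := by
      intro h hh
      have : L i j2 ∈ Finset.image (fun h => L h j1) Finset.univ :=
        Finset.mem_image.mpr ⟨h, Finset.mem_univ h, hh⟩
      rw [hcol1] at this
      rcases Finset.mem_insert.mp this with h1 | h1
      · exact hne12 h1.symm
      · exact hinRow j2 h1
    have hnc2 : ∀ h : Fin n, L h j2 ≠ L i j1 := by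
      intro h hh
      have : L i j1 ∈ Finset.image (fun h => L h j2) Finset.univ :=
        Finset.mem_image.mpr ⟨h, Finset.mem_univ h, hh⟩
      rw [hcol2] at this
      rcases Finset.mem_insert.mp this with h1 | h1
      · exact hne12 h1
      · exact hinRow j1 h1
    -- swap the two entries in row i
    set L' : Fin n → Fin n → Fin (2*n-1) :=
      fun a b => if a = i then L i (Equiv.swap j1 j2 b) else L a b with hL'
    have hL'Lat : IsLatin n (2*n-1) L' := by
      have hcolInj : ∀ (b a a' : Fin n), L a b = L a' b → a = a' :=
        fun b a a' h => hLat.2 b h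
      constructor
      · intro a
        by_cases ha : a = i
        · have hfun : L' a = L i ∘ Equiv.swap j1 j2 := by
            funext b; simp [hL', ha]
          rw [hfun]
          exact (hLat.1 i).comp (Equiv.swap j1 j2).injective
        · have hfun : L' a = L a := by funext b; simp [hL', ha]
          rw [hfun]
          exact hLat.1 a
      · intro b a a' haa'
        simp only [hL'] at haa'
        have swapmem : ∀ h : Fin n, L h b ≠ L i (Equiv.swap j1 j2 b) ∨
            Equiv.swap j1 j2 b = b := by
          intro h
          by_cases hb1 : b = j1
          · subst hb1; rw [Equiv.swap_apply_left]; exact Or.inl (hnc1 h)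
          · by_cases hb2 : b = j2
            · subst hb2; rw [Equiv.swap_apply_right]; exact Or.inl (hnc2 h)
            · exact Or.inr (Equiv.swap_apply_of_ne_of_ne hb1 hb2)
        by_cases ha : a = i <;> by_cases ha' : a' = i
        · rw [ha, ha']
        · rw [if_pos ha, if_neg ha'] at haa'
          rcases swapmem a' with h1 | h1
          · exact absurd haa'.symm h1
          · rw [h1] at haa'
            rw [ha]
            exact hcolInj b i a' haa'
        · rw [if_neg ha, if_pos ha'] at haa'
          rcases swapmem a with h1 | h1
          · exact absurd haa' h1
          · rw [h1] at haa'
            rw [ha']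
            exact hcolInj b a i haa'
        · rw [if_neg ha, if_neg ha'] at haa'
          exact hcolInj b a a' haa'
    have hL'Ext : ExtendsPC P L' := by
      intro a b c hc
      by_cases ha : a = i
      · have hb1 : b ≠ j1 := by rintro rfl; rw [ha, hp] at hc; cases hc
        have hb2 : b ≠ j2 := by rintro rfl; rw [ha, hq] at hc; cases hc
        have : L' a b = L a b := by
          simp [hL', ha, Equiv.swap_apply_of_ne_of_ne hb1 hb2]
        rw [this]
        exact hExt a b c hc
      · have : L' a b = L a b := by simp [hL', ha]
        rw [this]
        exact hExt a b c hc
    have heq := hUniq L' ⟨hL'Lat, hL'Ext⟩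
    have : L' i j1 = L i j1 := by rw [heq]
    simp only [hL', if_pos, Equiv.swap_apply_left] at this
    exact hne12 this.symm
  refine ⟨main, ?_⟩
  rcases Nat.eq_zero_or_pos n with hn | hn
  · subst hn; simp
  -- the set is nonempty: a full Latin coloring exists
  have hex : ∃ P : Fin n → Fin n → Option (Fin (2*n-1)),
      UniquelyExtends n (2*n-1) P ∧ numColored P = n^2 := by
    have hlt : ∀ i j : Fin n, (i : ℕ) + j < 2*n-1 := by
      intro i j; have := i.isLt; have := j.isLt; omega
    set L0 : Fin n → Fin n → Fin (2*n-1) := fun i j => ⟨(i : ℕ) + j, hlt i j⟩ with hL0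
    refine ⟨fun i j => some (L0 i j), ⟨L0, ⟨⟨?_, ?_⟩, ?_⟩, ?_⟩, ?_⟩
    · intro i a b hab
      simp only [hL0, Fin.mk.injEq] at hab
      exact Fin.ext (by omega)
    · intro j a b hab
      simp only [hL0, Fin.mk.injEq] at hab
      exact Fin.ext (by omega)
    · intro i j c hc
      exact Option.some_injective _ hc
    · intro L' ⟨_, hE⟩
      funext a b
      exact hE a b (L0 a b) rfl
    · unfold numColored
      rw [Finset.filter_true_of_mem (by intro p _; simp)]
      rw [Finset.card_univ]
      simp [sq]
  obtain ⟨P0, hP0, hP0c⟩ := hex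
  rw [definingNumber]
  have hne : {m | ∃ P : Fin n → Fin n → Option (Fin (2*n-1)),
      UniquelyExtends n (2*n-1) P ∧ numColored P = m}.Nonempty :=
    ⟨n^2, P0, hP0, hP0c⟩
  apply le_csInf hne
  rintro m ⟨P, hPU, rfl⟩
  have hsum : numColored P + numUncolored P = n^2 := by
    unfold numColored numUncolored
    have hrw : (Finset.univ.filter (fun p : Fin n × Fin n => P p.1 p.2 = none)) =
        (Finset.univ.filter (fun p : Fin n × Fin n => ¬ P p.1 p.2 ≠ none)) := by
      apply Finset.filter_congr
      intro p _
      simp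
    rw [hrw, Finset.card_filter_add_card_filter_not, Finset.card_univ]
    simp [sq]
  have hle : numUncolored P ≤ n := by
    by_contra h
    exact main P (by omega) hPU
  omega
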